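/- Let Y be a compact Hausdorff (or normal) space and let α = {α_v}_{v∈V} and α' = {α'_w}_{w∈W} be finite closed covers of Y with α refining α' via a projection p : V → W (α_v ⊆ α'_{p(v)}). Then there exist open swellings β = {β_v}_{v∈V} and β' = {β'_w}_{w∈W} (open sets with α_v ⊆ β_v, α'_w ⊆ β'_w, having the same nerve as α, α' respectively, i.e., any subfamily of the swelling has nonempty intersection iff the corresponding subfamily of the original does) such that β_v ⊆ β'_{p(v)} for all v ∈ V. -/

import Mathlib

open Set

/-- Swelling lemma with closures: a finite closed family in a normal space admits an open
swelling whose closures have the same nerve. -/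
theorem exists_swelling_closure {Y : Type*} [TopologicalSpace Y] [NormalSpace Y]
    {V : Type*} [Finite V] (α : V → Set Y) (hα : ∀ v, IsClosed (α v)) :
    ∃ β : V → Set Y, (∀ v, IsOpen (β v)) ∧ (∀ v, α v ⊆ β v) ∧
      ∀ S : Set V, (⋂ v ∈ S, closure (β v)).Nonempty → (⋂ v ∈ S, α v).Nonempty := by
  classical
  have : Fintype V := Fintype.ofFinite V
  suffices h : ∀ s : Finset V, ∃ γ : V → Set Y,
      (∀ v ∈ s, IsOpen (γ v)) ∧ (∀ v ∉ s, γ v = α v) ∧ (∀ v, α v ⊆ γ v) ∧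
      ∀ S : Set V, (⋂ v ∈ S, closure (γ v)).Nonempty → (⋂ v ∈ S, α v).Nonempty by
    obtain ⟨γ, h1, _, h3, h4⟩ := h Finset.univ
    exact ⟨γ, fun v => h1 v (Finset.mem_univ v), h3, h4⟩
  intro s
  induction s using Finset.induction_on with
  | empty =>
      refine ⟨α, by simp, fun _ _ => rfl, fun _ => subset_rfl, ?_⟩
      intro S hS
      simpa [fun v => (hα v).closure_eq] using hS
  | insert _ _ ha IH =>
      rename_i a s
      obtain ⟨γ, hop, heq, hsub, hP⟩ := IH
      have hγa : γ a = α a := heq a ha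
      set Bad : Set (Set V) := {S | a ∉ S ∧ (α a ∩ ⋂ u ∈ S, closure (γ u)) = ∅} with hBad
      set C : Set Y := ⋃ S ∈ Bad, ⋂ u ∈ S, closure (γ u) with hC
      have hCclosed : IsClosed C := by
        apply Set.Finite.isClosed_biUnion (Set.toFinite Bad)
        intro S _
        exact isClosed_biInter fun u _ => isClosed_closure
      have hdisj : α a ⊆ Cᶜ := by
        intro x hx hxC
        obtain ⟨S, hS, hxS⟩ := mem_iUnion₂.mp hxC
        have : x ∈ α a ∩ ⋂ u ∈ S, closure (γ u) := ⟨hx, hxS⟩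
        rw [hS.2] at this
        exact this
      obtain ⟨U, hUopen, hαU, hclU⟩ :=
        normal_exists_closure_subset (hα a) hCclosed.isOpen_compl hdisj
      refine ⟨Function.update γ a U, ?_, ?_, ?_, ?_⟩
      · intro v hv
        rcases eq_or_ne v a with rfl | hne
        · simpa using hUopen
        · rw [Function.update_of_ne hne]
          exact hop v ((Finset.mem_insert.mp hv).resolve_left hne)
      · intro v hv
        have hne : v ≠ a := fun h => hv (h ▸ Finset.mem_insert_self a s)
        rw [Function.update_of_ne hne]
        exact heq v fun h => hv (Finset.mem_insert_of_mem h)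
      · intro v
        rcases eq_or_ne v a with rfl | hne
        · simpa using hαU
        · rw [Function.update_of_ne hne]; exact hsub v
      · intro S ⟨x, hx⟩
        simp only [mem_iInter] at hx
        by_cases haS : a ∈ S
        · -- the key step
          have hxU : x ∈ closure U := by
            have := hx a haS
            simpa using this
          have hrest : ∀ u ∈ S \ ({a} : Set V), x ∈ closure (γ u) := by
            intro u hu
            have := hx u hu.1
            rwa [Function.update_of_ne hu.2] at this
          have hne : (α a ∩ ⋂ u ∈ S \ ({a} : Set V), closure (γ u)).Nonempty := by
            by_contra hemp
            rw [Set.not_nonempty_iff_eq_empty] at hemp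
            have hmem : (S \ ({a} : Set V)) ∈ Bad := ⟨fun h => h.2 rfl, hemp⟩
            have hxC : x ∈ C := mem_iUnion₂.mpr ⟨_, hmem, mem_iInter₂.mpr hrest⟩
            exact hclU hxU hxC
          obtain ⟨y, hy1, hy2⟩ := hne
          refine hP S ⟨y, mem_iInter₂.mpr fun v hv => ?_⟩
          rcases eq_or_ne v a with rfl | hvne
          · rw [hγa]; exact subset_closure hy1
          · exact mem_iInter₂.mp hy2 v ⟨hv, hvne⟩
        · refine hP S ⟨x, mem_iInter₂.mpr fun v hv => ?_⟩
          have := hx v hv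
          rwa [Function.update_of_ne (by rintro rfl; exact haS hv)] at this

/-- Let `Y` be a normal space, and let `α`, `α'` be finite closed covers of
`Y` such that `α` refines `α'` via a projection `p` (`α v ⊆ α' (p v)`). Then there exist open
swellings `β` of `α` and `β'` of `α'` (open families containing the closed ones member-wise and
having the same nerve: a subfamily of the swelling has nonempty intersection iff the
corresponding closed subfamily does) such that `β v ⊆ β' (p v)` for all `v`. -/
theorem swelling_compatible_with_refinement
    {Y : Type*} [TopologicalSpace Y] [NormalSpace Y]
    {V W : Type*} [Finite V] [Finite W]
    (α : V → Set Y) (α' : W → Set Y)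
    (hα : ∀ v, IsClosed (α v)) (hα' : ∀ w, IsClosed (α' w))
    (hαcov : (⋃ v, α v) = Set.univ) (hα'cov : (⋃ w, α' w) = Set.univ)
    (p : V → W) (hp : ∀ v, α v ⊆ α' (p v)) :
    ∃ (β : V → Set Y) (β' : W → Set Y),
      (∀ v, IsOpen (β v)) ∧ (∀ v, α v ⊆ β v) ∧
      (∀ S : Set V, (⋂ v ∈ S, β v).Nonempty ↔ (⋂ v ∈ S, α v).Nonempty) ∧
      (∀ w, IsOpen (β' w)) ∧ (∀ w, α' w ⊆ β' w) ∧
      (∀ T : Set W, (⋂ w ∈ T, β' w).Nonempty ↔ (⋂ w ∈ T, α' w).Nonempty) ∧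
      (∀ v, β v ⊆ β' (p v)) := by
  obtain ⟨β', hβ'op, hβ'sub, hβ'P⟩ := exists_swelling_closure α' hα'
  obtain ⟨β₁, hβ₁op, hβ₁sub, hβ₁P⟩ := exists_swelling_closure α hα
  refine ⟨fun v => β₁ v ∩ β' (p v), β', ?_, ?_, ?_, hβ'op, hβ'sub, ?_, ?_⟩
  · exact fun v => (hβ₁op v).inter (hβ'op (p v))
  · exact fun v => subset_inter (hβ₁sub v) ((hp v).trans (hβ'sub (p v)))
  · intro S
    constructor
    · rintro ⟨x, hx⟩
      refine hβ₁P S ⟨x, mem_iInter₂.mpr fun v hv => ?_⟩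
      exact subset_closure (mem_iInter₂.mp hx v hv).1
    · rintro ⟨x, hx⟩
      refine ⟨x, mem_iInter₂.mpr fun v hv => ?_⟩
      have := mem_iInter₂.mp hx v hv
      exact ⟨hβ₁sub v this, hβ'sub (p v) (hp v this)⟩
  · intro T
    constructor
    · rintro ⟨x, hx⟩
      refine hβ'P T ⟨x, mem_iInter₂.mpr fun w hw => ?_⟩
      exact subset_closure (mem_iInter₂.mp hx w hw)
    · rintro ⟨x, hx⟩
      exact ⟨x, mem_iInter₂.mpr fun w hw => hβ'sub w (mem_iInter₂.mp hx w hw)⟩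
  · exact fun v => inter_subset_right
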